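/- Let π0 ∈ [0,1], let G0 be the identity function on [0,1], let G1 : [0,1] → ℝ, and set G = π0·G0 + (1−π0)·G1. Let T be a map from functions [0,1] → ℝ to [0,1] with τ* = T(G), Hadamard-differentiable at G tangentially to continuous functions with derivative Ṫ: for every continuous H : [0,1] → ℝ and every family (H_t)_{t>0} of cadlag functions with ‖H_t − H‖_∞ → 0 as t → 0⁺, one has (T(G + t·H_t) − T(G))/t → Ṫ(H). Define V(F0,F1) = π0·F0(T(π0·F0 + (1−π0)·F1)). Then for all continuous H0, H1 : [0,1] → ℝ and all families (H_{0,t})_{t>0}, (H_{1,t})_{t>0} of cadlag functions with ‖H_{0,t} − H0‖_∞ → 0 and ‖H_{1,t} − H1‖_∞ → 0, one has (V(G0 + t·H_{0,t}, G1 + t·H_{1,t}) − V(G0,G1))/t → π0·Ṫ(π0·H0 + (1−π0)·H1) + π0·H0(τ*) as t → 0⁺. -/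

import Mathlib

open Filter Set

/-- A cadlag function on `[0,1]`: right-continuous on `[0,1)` and with left limits
at every point of `(0,1]`. -/
def Cadlag (f : ℝ → ℝ) : Prop :=
  (∀ x ∈ Set.Ico (0:ℝ) 1, ContinuousWithinAt f (Set.Ici x) x) ∧
  (∀ x ∈ Set.Ioc (0:ℝ) 1, ∃ l, Filter.Tendsto f (nhdsWithin x (Set.Iio x)) (nhds l))

/-- Convergence in sup norm on `[0,1]` as `t → 0⁺`. -/
def SupConv (Ht : ℝ → ℝ → ℝ) (H : ℝ → ℝ) : Prop :=
  ∀ ε > (0:ℝ), ∀ᶠ t in nhdsWithin (0:ℝ) (Set.Ioi 0),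
    ∀ x ∈ Set.Icc (0:ℝ) 1, |Ht t x - H x| ≤ ε

/-- Hadamard differentiability of the proportion-of-false-rejections
map `V(F0,F1) = π0·F0(T(π0·F0 + (1−π0)·F1))` at `(G0,G1)`, `G0 = id`, with derivative
`(H0,H1) ↦ π0·Ṫ(π0·H0 + (1−π0)·H1) + π0·H0(τ*)`. -/
theorem stmt_9 (π0 : ℝ) (G1 : ℝ → ℝ) (T : (ℝ → ℝ) → ℝ) (Tdot : (ℝ → ℝ) → ℝ) (τs : ℝ)
    (hπ0 : π0 ∈ Set.Icc (0:ℝ) 1)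
    (hτs : τs = T (fun x => π0 * x + (1 - π0) * G1 x))
    (hTrange : ∀ F : ℝ → ℝ, T F ∈ Set.Icc (0:ℝ) 1)
    (hHad : ∀ H : ℝ → ℝ, ContinuousOn H (Set.Icc 0 1) →
      ∀ Ht : ℝ → ℝ → ℝ, (∀ t ∈ Set.Ioi (0:ℝ), Cadlag (Ht t)) → SupConv Ht H →
      Filter.Tendsto
        (fun t => (T (fun x => (π0 * x + (1 - π0) * G1 x) + t * Ht t x)
          - T (fun x => π0 * x + (1 - π0) * G1 x)) / t)
        (nhdsWithin (0:ℝ) (Set.Ioi 0)) (nhds (Tdot H))) :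
    ∀ H0 H1 : ℝ → ℝ, ContinuousOn H0 (Set.Icc 0 1) → ContinuousOn H1 (Set.Icc 0 1) →
      ∀ H0t H1t : ℝ → ℝ → ℝ,
        (∀ t ∈ Set.Ioi (0:ℝ), Cadlag (H0t t)) → (∀ t ∈ Set.Ioi (0:ℝ), Cadlag (H1t t)) →
        SupConv H0t H0 → SupConv H1t H1 →
        Filter.Tendsto
          (fun t =>
            (π0 * (T (fun x => π0 * (x + t * H0t t x) + (1 - π0) * (G1 x + t * H1t t x))
                + t * H0t t (T (fun x =>
                    π0 * (x + t * H0t t x) + (1 - π0) * (G1 x + t * H1t t x))))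
              - π0 * T (fun x => π0 * x + (1 - π0) * G1 x)) / t)
          (nhdsWithin (0:ℝ) (Set.Ioi 0))
          (nhds (π0 * Tdot (fun x => π0 * H0 x + (1 - π0) * H1 x) + π0 * H0 τs)) := by
  intro H0 H1 hH0 hH1 H0t H1t hc0 hc1 hs0 hs1
  have hπa : (0:ℝ) ≤ π0 := hπ0.1
  have hπb : (0:ℝ) ≤ 1 - π0 := by linarith [hπ0.2]
  set l := nhdsWithin (0:ℝ) (Set.Ioi 0) with hl
  set G : ℝ → ℝ := fun x => π0 * x + (1 - π0) * G1 x with hG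
  set H : ℝ → ℝ := fun x => π0 * H0 x + (1 - π0) * H1 x with hH
  set Ht : ℝ → ℝ → ℝ := fun t x => π0 * H0t t x + (1 - π0) * H1t t x with hHt
  have hHcont : ContinuousOn H (Set.Icc 0 1) :=
    (continuousOn_const.mul hH0).add (continuousOn_const.mul hH1)
  have hcad : ∀ t ∈ Set.Ioi (0:ℝ), Cadlag (Ht t) := by
    intro t ht
    obtain ⟨h0r, h0l⟩ := hc0 t ht
    obtain ⟨h1r, h1l⟩ := hc1 t ht
    constructor
    · intro x hx
      exact (continuousWithinAt_const.mul (h0r x hx)).add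
        (continuousWithinAt_const.mul (h1r x hx))
    · intro x hx
      obtain ⟨l0, hl0⟩ := h0l x hx
      obtain ⟨l1, hl1⟩ := h1l x hx
      exact ⟨π0 * l0 + (1 - π0) * l1, (hl0.const_mul π0).add (hl1.const_mul _)⟩
  have hsup : SupConv Ht H := by
    intro ε hε
    filter_upwards [hs0 ε hε, hs1 ε hε] with t h0 h1 x hx
    have h0x := h0 x hx
    have h1x := h1 x hx
    have heq : Ht t x - H x = π0 * (H0t t x - H0 x) + (1 - π0) * (H1t t x - H1 x) := by
      simp only [hHt, hH]; ring
    calc |Ht t x - H x|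
        = |π0 * (H0t t x - H0 x) + (1 - π0) * (H1t t x - H1 x)| := by rw [heq]
      _ ≤ |π0 * (H0t t x - H0 x)| + |(1 - π0) * (H1t t x - H1 x)| := abs_add_le _ _
      _ = π0 * |H0t t x - H0 x| + (1 - π0) * |H1t t x - H1 x| := by
          rw [abs_mul, abs_mul, abs_of_nonneg hπa, abs_of_nonneg hπb]
      _ ≤ π0 * ε + (1 - π0) * ε :=
          add_le_add (mul_le_mul_of_nonneg_left h0x hπa)
            (mul_le_mul_of_nonneg_left h1x hπb)
      _ = ε := by ring
  have hT := hHad H hHcont Ht hcad hsup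
  set τ : ℝ → ℝ := fun t =>
    T (fun x => π0 * (x + t * H0t t x) + (1 - π0) * (G1 x + t * H1t t x)) with hτ
  have hτeq : ∀ t, τ t = T (fun x => G x + t * Ht t x) := by
    intro t
    simp only [hτ]
    congr 1
    funext x
    simp only [hG, hHt]
    ring
  have hq : Filter.Tendsto (fun t => (τ t - T G) / t) l (nhds (Tdot H)) := by
    refine hT.congr fun t => ?_
    rw [hτeq t]
  have ht0 : Filter.Tendsto (fun t : ℝ => t) l (nhds 0) :=
    Filter.tendsto_id.mono_left nhdsWithin_le_nhds
  have hτtend : Filter.Tendsto τ l (nhds τs) := by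
    have h1 : Filter.Tendsto (fun t => T G + t * ((τ t - T G) / t)) l
        (nhds (T G + 0 * Tdot H)) := tendsto_const_nhds.add (ht0.mul hq)
    have h2 : Filter.Tendsto τ l (nhds (T G)) := by
      refine Filter.Tendsto.congr' ?_ (by simpa using h1)
      filter_upwards [self_mem_nhdsWithin] with t (ht : t ∈ Set.Ioi (0:ℝ))
      have hne : t ≠ 0 := ne_of_gt ht
      field_simp
      ring
    have : τs = T G := hτs
    rwa [this]
  have hτmem : ∀ t, τ t ∈ Set.Icc (0:ℝ) 1 := fun t => hTrange _
  have hτsmem : τs ∈ Set.Icc (0:ℝ) 1 := by rw [hτs]; exact hTrange _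
  have hH0τ : Filter.Tendsto (fun t => H0 (τ t)) l (nhds (H0 τs)) := by
    have hcw : Filter.Tendsto H0 (nhdsWithin τs (Set.Icc 0 1)) (nhds (H0 τs)) :=
      hH0 τs hτsmem
    exact hcw.comp (tendsto_nhdsWithin_iff.mpr ⟨hτtend, Filter.Eventually.of_forall hτmem⟩)
  have hdiff0 : Filter.Tendsto (fun t => H0t t (τ t) - H0 (τ t)) l (nhds 0) := by
    rw [Metric.tendsto_nhds]
    intro ε hε
    filter_upwards [hs0 (ε / 2) (by linarith)] with t h0
    have := h0 (τ t) (hτmem t)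
    rw [Real.dist_eq, sub_zero]
    linarith
  have hH0tτ : Filter.Tendsto (fun t => H0t t (τ t)) l (nhds (H0 τs)) := by
    have := hdiff0.add hH0τ
    simpa using this
  have hmain : Filter.Tendsto (fun t => π0 * ((τ t - T G) / t) + π0 * H0t t (τ t)) l
      (nhds (π0 * Tdot H + π0 * H0 τs)) :=
    (hq.const_mul π0).add (hH0tτ.const_mul π0)
  refine Filter.Tendsto.congr' ?_ hmain
  filter_upwards [self_mem_nhdsWithin] with t (ht : t ∈ Set.Ioi (0:ℝ))
  have hne : t ≠ 0 := ne_of_gt ht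
  show π0 * ((τ t - T G) / t) + π0 * H0t t (τ t)
      = (π0 * (τ t + t * H0t t (τ t)) - π0 * T G) / t
  field_simp
  ring
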